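/- arXiv:math/0609575 — 2 statements merged into one kernel-verified Lean document; each statement's English description precedes it below -/
import Mathlib

section
/- Every R-linear derivation of Mat_n(R), for R a commutative ring with n invertible, is inner; moreover the map ad restricted to trace-zero matrices sl_n(R) → Der_R(Mat_n(R)) is an isomorphism of Lie algebras. -/
open Matrix

lemma sum_diag_one (R : Type*) [CommRing R] (n : ℕ) :
    ∑ k : Fin n, single k k (1:R) = 1 := by
  ext i j
  rcases eq_or_ne i j with rfl | h
  · simp [Matrix.sum_apply, single, Matrix.one_apply, Finset.sum_ite_eq]
  · simp only [Matrix.sum_apply, single, of_apply, Matrix.one_apply, h, if_neg h]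
    apply Finset.sum_eq_zero
    intro k _
    by_cases hk : k = i
    · subst hk; simp [h]
    · simp [hk]

lemma deriv_inner {R : Type*} [CommRing R] {n : ℕ} [NeZero n]
    (D : Matrix (Fin n) (Fin n) R →ₗ[R] Matrix (Fin n) (Fin n) R)
    (hD : ∀ a b, D (a * b) = D a * b + a * D b) :
    ∃ a : Matrix (Fin n) (Fin n) R, ∀ b, D b = a * b - b * a := by
  set E : Fin n → Fin n → Matrix (Fin n) (Fin n) R := fun i j => single i j 1 with hE
  have Emul : ∀ i j k l, E i j * E k l = if j = k then E i l else 0 := by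
    intro i j k l
    rcases eq_or_ne j k with rfl | h
    · simp [hE, single_mul_single_same]
    · rw [if_neg h, hE]
      exact Matrix.single_mul_single_of_ne _ _ _ _ h _
  set o : Fin n := 0 with ho
  set a : Matrix (Fin n) (Fin n) R := ∑ k, D (E k o) * E o k with ha
  have heoo : E o o * E o o = E o o := by simp [Emul]
  have hidem : D (E o o) = D (E o o) * E o o + E o o * D (E o o) := by
    conv_lhs => rw [show E o o = E o o * E o o from heoo.symm]
    rw [hD]
  have h00 : E o o * D (E o o) * E o o = 0 := by
    have h2 : E o o * D (E o o) * E o o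
        = E o o * D (E o o) * E o o + E o o * D (E o o) * E o o := by
      calc E o o * D (E o o) * E o o
          = E o o * (D (E o o) * E o o + E o o * D (E o o)) * E o o := by rw [← hidem]
        _ = E o o * D (E o o) * (E o o * E o o) + (E o o * E o o) * D (E o o) * E o o := by
            noncomm_ring
        _ = E o o * D (E o o) * E o o + E o o * D (E o o) * E o o := by rw [heoo]
    exact left_eq_add.mp h2
  -- key : E o j * D (E k o) = ite - D(E o j) * E k o
  have key : ∀ j k : Fin n, E o j * D (E k o)
      = (if j = k then D (E o o) else 0) - D (E o j) * E k o := by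
    intro j k
    have := hD (E o j) (E k o)
    rw [Emul] at this
    rcases eq_or_ne j k with rfl | h
    · rw [if_pos rfl] at this ⊢
      rw [eq_sub_iff_add_eq, add_comm]
      exact this.symm
    · rw [if_neg h] at this ⊢
      rw [map_zero] at this
      rw [eq_sub_iff_add_eq, add_comm]
      exact this.symm
  -- right multiplication by a
  have hleft : ∀ i j : Fin n, E i j * a = - (E i o * D (E o j)) := by
    intro i j
    rw [ha, Finset.mul_sum]
    have hsplit : ∀ k : Fin n, E i j * (D (E k o) * E o k)
        = E i o * ((if j = k then D (E o o) else 0) * E o k)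
          - E i o * (D (E o j) * (E k o * E o k)) := by
      intro k
      have hij : E i j = E i o * E o j := by rw [Emul]; simp
      calc E i j * (D (E k o) * E o k)
          = E i o * ((E o j * D (E k o)) * E o k) := by rw [hij]; noncomm_ring
        _ = E i o * (((if j = k then D (E o o) else 0) - D (E o j) * E k o) * E o k) := by
            rw [key]
        _ = _ := by noncomm_ring
    rw [Finset.sum_congr rfl fun k _ => hsplit k, Finset.sum_sub_distrib]
    have h1 : ∑ k : Fin n, E i o * ((if j = k then D (E o o) else 0) * E o k) = 0 := by
      rw [Finset.sum_eq_single j]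
      · rw [if_pos rfl]
        have : E i o * (D (E o o) * E o j)
            = E i o * (E o o * D (E o o) * E o o) * E o j := by
          have h1 : E i o = E i o * E o o := by rw [Emul]; simp
          have h2 : E o j = E o o * E o j := by rw [Emul]; simp
          conv_lhs => rw [h1, h2]
          noncomm_ring
        rw [this, h00]
        simp
      · intro k _ hk; simp [Ne.symm hk]
      · simp
    have h2 : ∑ k : Fin n, E i o * (D (E o j) * (E k o * E o k))
        = E i o * D (E o j) := by
      rw [← Finset.mul_sum, ← Finset.mul_sum]
      have : ∑ k : Fin n, E k o * E o k = 1 := by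
        have : ∀ k : Fin n, E k o * E o k = single k k (1:R) := by
          intro k; rw [Emul]; simp [hE]
        rw [Finset.sum_congr rfl fun k _ => this k, sum_diag_one]
      rw [this, mul_one]
    rw [h1, h2, zero_sub]
  have hright : ∀ i j : Fin n, a * E i j = D (E i o) * E o j := by
    intro i j
    rw [ha, Finset.sum_mul]
    rw [Finset.sum_eq_single i]
    · rw [mul_assoc, Emul]; simp
    · intro k _ hk
      rw [mul_assoc, Emul]
      simp [hk]
    · simp
  have hbasis : ∀ i j : Fin n, D (E i j) = a * E i j - E i j * a := by
    intro i j
    have hij : E i j = E i o * E o j := by rw [Emul]; simp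
    rw [hij, hD, ← hij, hright, hleft]
    abel
  refine ⟨a, fun b => ?_⟩
  induction b using Matrix.induction_on' with
  | h_zero => simp
  | h_add p q hp hq => rw [map_add, hp, hq]; noncomm_ring
  | h_std_basis i j c =>
      have : single i j c = c • E i j := by
        rw [hE]; rw [smul_single]; simp
      rw [this, LinearMap.map_smul, hbasis]
      rw [smul_sub, mul_smul_comm, smul_mul_assoc]

/-- For `R` a commutative ring with `n` invertible, every `R`-linear derivation of
`Mat_n(R)` is inner, given by `ad` of a unique trace-zero matrix; i.e.
`ad : sl_n(R) → Der_R(Mat_n(R))` is an isomorphism (it is injective on trace-zero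
matrices and hits every derivation). -/
theorem matrix_derivations_inner (R : Type*) [CommRing R] (n : ℕ)
    (hn : IsUnit (n : R)) :
    (∀ D : Matrix (Fin n) (Fin n) R →ₗ[R] Matrix (Fin n) (Fin n) R,
      (∀ a b : Matrix (Fin n) (Fin n) R, D (a * b) = D a * b + a * D b) →
      ∃ x : Matrix (Fin n) (Fin n) R, Matrix.trace x = 0 ∧
        ∀ b : Matrix (Fin n) (Fin n) R, D b = x * b - b * x) ∧
    (∀ x y : Matrix (Fin n) (Fin n) R, Matrix.trace x = 0 → Matrix.trace y = 0 →
      (∀ b : Matrix (Fin n) (Fin n) R, x * b - b * x = y * b - b * y) → x = y) := by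
  have hinv : (↑hn.unit⁻¹ : R) * n = 1 := by
    exact IsUnit.val_inv_mul hn
  constructor
  · intro D hD
    rcases Nat.eq_zero_or_pos n with rfl | hpos
    · refine ⟨0, by simp [Matrix.trace], fun b => ?_⟩
      ext i j
      exact i.elim0
    · haveI : NeZero n := ⟨hpos.ne'⟩
      obtain ⟨a, hainner⟩ := deriv_inner D hD
      refine ⟨a - ((↑hn.unit⁻¹ : R) * Matrix.trace a) • 1, ?_, fun b => ?_⟩
      · rw [trace_sub, trace_smul, trace_one, smul_eq_mul, Fintype.card_fin]
        linear_combination (-Matrix.trace a) * hinv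
      · rw [hainner]
        simp only [sub_mul, mul_sub, smul_mul_assoc, mul_smul_comm, one_mul, mul_one]
        abel
  · intro x y hx hy hcom
    have hz : ∀ b, (x - y) * b = b * (x - y) := by
      intro b
      have h := hcom b
      rw [sub_mul, mul_sub]
      linear_combination (norm := abel) h
    obtain ⟨r, hr⟩ := mem_range_scalar_iff_commute_single'.mpr
      (fun i j => (hz (single i j 1)).symm)
    have htr : Matrix.trace (x - y) = 0 := by rw [trace_sub, hx, hy, sub_zero]
    have hr0 : r = 0 := by
      rw [← hr] at htr
      rw [scalar_apply, trace_diagonal] at htr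
      simp only [Finset.sum_const, Finset.card_univ, Fintype.card_fin, nsmul_eq_mul] at htr
      have := congrArg (fun t => (↑hn.unit⁻¹ : R) * t) htr
      simp only [mul_zero, ← mul_assoc, hinv, one_mul] at this
      exact this
    rw [hr0, map_zero] at hr
    exact sub_eq_zero.mp hr.symm
end

section
/- Let R be a commutative ring and A = Mat_n(R). The cotrace map cotr : C^•(R, R) → C^•(A, A) defined by cotr(D)(a_1 ⊗ r_1, …, a_m ⊗ r_m) = a_1⋯a_m · D(r_1, …, r_m) (viewing A = Mat_n(k) ⊗ R elements as sums of a ⊗ r) is a morphism of complexes commuting with the Hochschild differentials. -/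
/-- Hochschild `m`-cochains on `A` (function model). -/
def Cochain (A : Type*) (m : ℕ) := (Fin m → A) → A

/-- The Hochschild differential on `m`-cochains:
`(δD)(a₀,…,a_m) = a₀D(a₁,…,a_m) + Σ (−1)^{i+1} D(…,a_i a_{i+1},…) + (−1)^{m+1} D(a₀,…,a_{m−1})a_m`. -/
def hochschildD {A : Type*} [Ring A] (m : ℕ) (D : Cochain A m) : Cochain A (m + 1) :=
  fun a =>
    a 0 * D (fun j => a j.succ) +
      ∑ i : Fin m, (-1 : ℤ) ^ ((i : ℕ) + 1) •
        D (fun j => if (j : ℕ) < (i : ℕ) then a j.castSucc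
            else if (j : ℕ) = (i : ℕ) then a j.castSucc * a j.succ
            else a j.succ) +
      (-1 : ℤ) ^ (m + 1) • (D (fun j => a j.castSucc) * a (Fin.last m))

/-- The cotrace map `cotr : C^•(R,R) → C^•(Mat_n(R), Mat_n(R))`: under the
identification `Mat_n(R) = Mat_n(k) ⊗ R`, `cotr(D)(a₁⊗r₁, …, a_m⊗r_m) =
(a₁⋯a_m) ⊗ D(r₁,…,r_m)`; in matrix entries,
`cotr(D)(A₁,…,A_m)_{i,j} = Σ_{paths i=p₀,…,p_m=j} D((A₁)_{p₀p₁}, …, (A_m)_{p_{m−1}p_m})`. -/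
def cotrace {R : Type*} [CommRing R] (n m : ℕ) (D : Cochain R m) :
    Cochain (Matrix (Fin n) (Fin n) R) m :=
  fun A => Matrix.of fun i j =>
    ∑ p : Fin (m + 1) → Fin n,
      if p 0 = i ∧ p (Fin.last m) = j then
        D (fun s => A s (p s.castSucc) (p s.succ))
      else 0

section Aux

variable {β : Type*}

lemma aux_insert_le {m : ℕ} (k : Fin m) (t : β) (p' : Fin (m + 1) → β) (a : Fin (m + 1))
    (h : (a : ℕ) ≤ (k : ℕ)) :
    Fin.insertNth (α := fun _ => β) k.succ.castSucc t p' a.castSucc = p' a := by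
  rw [← Fin.succAbove_of_castSucc_lt k.succ.castSucc a (by simp [Fin.lt_def]; omega),
    Fin.insertNth_apply_succAbove]

lemma aux_insert_gt {m : ℕ} (k : Fin m) (t : β) (p' : Fin (m + 1) → β) (a : Fin (m + 1))
    (h : (k : ℕ) < (a : ℕ)) :
    Fin.insertNth (α := fun _ => β) k.succ.castSucc t p' a.succ = p' a := by
  rw [← Fin.succAbove_of_le_castSucc k.succ.castSucc a (by simp [Fin.le_def]; omega),
    Fin.insertNth_apply_succAbove]

lemma snoc_apply_zero {β : Type*} {m : ℕ} (p' : Fin (m + 1) → β) (x : β) :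
    (Fin.snoc p' x : Fin (m + 2) → β) 0 = p' 0 := by
  rw [← Fin.castSucc_zero, Fin.snoc_castSucc]

lemma aux_insert_zero {m : ℕ} (k : Fin m) (t : β) (p' : Fin (m + 1) → β) :
    Fin.insertNth (α := fun _ => β) k.succ.castSucc t p' 0 = p' 0 := by
  have := aux_insert_le k t p' 0 (Nat.zero_le _)
  rwa [Fin.castSucc_zero] at this

lemma aux_insert_last {m : ℕ} (k : Fin m) (t : β) (p' : Fin (m + 1) → β) :
    Fin.insertNth (α := fun _ => β) k.succ.castSucc t p' (Fin.last (m + 1)) = p' (Fin.last m) := by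
  have := aux_insert_gt k t p' (Fin.last m) (by simpa using k.isLt)
  rwa [Fin.succ_last] at this

lemma aux_insert_gt' {m : ℕ} (k : Fin m) (t : β) (p' : Fin (m + 1) → β) (a : Fin m)
    (h : (k : ℕ) < (a : ℕ)) :
    Fin.insertNth (α := fun _ => β) k.succ.castSucc t p' a.succ.castSucc = p' a.castSucc := by
  have ha : a.succ.castSucc = (a.castSucc).succ := (Fin.succ_castSucc a).symm
  rw [ha]
  exact aux_insert_gt k t p' a.castSucc (by simpa using h)

lemma ite_add3 {R : Type*} [AddCommMonoid R] (c : Prop) [Decidable c] (x y z : R) :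
    (if c then x + y + z else 0) = (if c then x else 0) + (if c then y else 0) +
      (if c then z else 0) := by
  split <;> simp

lemma ite_smul_zero {R : Type*} [AddCommGroup R] (c : Prop) [Decidable c] (z : ℤ) (w : R) :
    (if c then z • w else (0 : R)) = z • (if c then w else 0) := by
  split <;> simp

lemma ite_sum_zero {R : Type*} [AddCommMonoid R] {ι : Type*} (s : Finset ι)
    (c : Prop) [Decidable c] (f : ι → R) :
    (if c then ∑ k ∈ s, f k else 0) = ∑ k ∈ s, if c then f k else 0 := by
  split <;> simp

end Aux

/-- The cotrace map is a morphism of complexes: it commutes with the Hochschild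
differentials, `δ(cotr D) = cotr(δ D)`, for any `R`-multilinear cochain `D`. -/
theorem cotrace_chain_map {R : Type*} [CommRing R] (n m : ℕ)
    (D : MultilinearMap R (fun _ : Fin m => R) R) :
    hochschildD m (cotrace n m ⇑D) = cotrace n (m + 1) (hochschildD m ⇑D) := by
  classical
  funext A
  apply Matrix.ext
  intro i j
  simp only [hochschildD, cotrace, Matrix.of_apply, Matrix.add_apply, Matrix.sum_apply,
    Matrix.smul_apply, Matrix.mul_apply]
  simp only [ite_add3]
  rw [Finset.sum_add_distrib, Finset.sum_add_distrib]
  congr 1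
  · congr 1
    · conv_rhs => rw [← Equiv.sum_comp (Fin.consEquiv fun _ : Fin (m + 2) => Fin n)]
      rw [Fintype.sum_prod_type]
      simp only [Fin.consEquiv_apply, Fin.cons_zero, Fin.castSucc_zero, ← Fin.succ_last,
        ← Fin.succ_castSucc, Fin.cons_succ]
      simp only [Finset.mul_sum, mul_ite, mul_zero, ite_and]
      rw [Finset.sum_comm]
      conv_rhs => rw [Finset.sum_comm]
      simp only [Finset.sum_ite_eq, Finset.sum_ite_eq', Finset.mem_univ, if_true]
    · simp only [ite_sum_zero]
      conv_rhs => rw [Finset.sum_comm]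
      simp only [ite_smul_zero, ← Finset.smul_sum]
      apply Finset.sum_congr rfl
      intro k _
      congr 1
      conv_rhs => rw [← Equiv.sum_comp
        (Fin.insertNthEquiv (fun _ : Fin (m + 2) => Fin n) k.succ.castSucc)]
      rw [Fintype.sum_prod_type]
      conv_rhs => rw [Finset.sum_comm]
      apply Finset.sum_congr rfl
      intro p' _
      simp only [Fin.insertNthEquiv_apply, aux_insert_zero, aux_insert_last]
      rw [← ite_sum_zero]
      refine if_congr Iff.rfl ?_ rfl
      have hv : ∀ t : Fin n,
          (fun s : Fin m =>
              if (s : ℕ) < (k : ℕ) then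
                A s.castSucc (Fin.insertNth (α := fun _ => Fin n) k.succ.castSucc t p' s.castSucc.castSucc)
                  (Fin.insertNth (α := fun _ => Fin n) k.succ.castSucc t p' s.castSucc.succ)
              else
                if (s : ℕ) = (k : ℕ) then
                  A s.castSucc (Fin.insertNth (α := fun _ => Fin n) k.succ.castSucc t p' s.castSucc.castSucc)
                      (Fin.insertNth (α := fun _ => Fin n) k.succ.castSucc t p' s.castSucc.succ) *
                    A s.succ (Fin.insertNth (α := fun _ => Fin n) k.succ.castSucc t p' s.succ.castSucc)
                      (Fin.insertNth (α := fun _ => Fin n) k.succ.castSucc t p' s.succ.succ)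
                else
                  A s.succ (Fin.insertNth (α := fun _ => Fin n) k.succ.castSucc t p' s.succ.castSucc)
                    (Fin.insertNth (α := fun _ => Fin n) k.succ.castSucc t p' s.succ.succ)) =
            Function.update
              (fun s : Fin m =>
                (if (s : ℕ) < (k : ℕ) then A s.castSucc
                  else if (s : ℕ) = (k : ℕ) then A s.castSucc * A s.succ else A s.succ)
                  (p' s.castSucc) (p' s.succ))
              k (A k.castSucc (p' k.castSucc) t * A k.succ t (p' k.succ)) := by
        intro t
        funext s
        rcases lt_trichotomy (s : ℕ) (k : ℕ) with h | h | h
        · rw [Function.update_of_ne (Fin.ne_of_val_ne (Nat.ne_of_lt h)), if_pos h,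
            Fin.succ_castSucc, aux_insert_le k t p' s.castSucc (by simpa using h.le),
            aux_insert_le k t p' s.succ (by simpa using h)]
          simp [h]
        · have hs : s = k := Fin.ext h
          subst hs
          rw [Function.update_self, if_neg (lt_irrefl _), if_pos rfl, Fin.succ_castSucc,
            Fin.insertNth_apply_same, aux_insert_le s t p' s.castSucc (by simp),
            aux_insert_gt s t p' s.succ (by simp)]
        · rw [Function.update_of_ne (Fin.ne_of_val_ne (Nat.ne_of_gt h)), if_neg (by omega),
            if_neg (by omega), aux_insert_gt' k t p' s h,
            aux_insert_gt k t p' s.succ (by simp; omega)]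
          simp [Nat.lt_asymm h, Nat.ne_of_gt h]
      simp only [hv]
      rw [← MultilinearMap.map_update_sum, ← Matrix.mul_apply]
      refine (congrArg (⇑D) ?_).symm
      funext s
      rcases eq_or_ne s k with rfl | hs
      · simp
      · simp [Function.update_of_ne hs]
  · simp only [ite_smul_zero, ← Finset.smul_sum]
    congr 1
    conv_rhs => rw [← Equiv.sum_comp (Fin.snocEquiv fun _ : Fin (m + 2) => Fin n)]
    rw [Fintype.sum_prod_type]
    simp only [Fin.snocEquiv_apply, Fin.succ_castSucc, Fin.succ_last, Fin.snoc_last]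
    simp only [← Fin.castSucc_zero (n := m + 1), Fin.snoc_castSucc, snoc_apply_zero]
    simp only [Finset.sum_mul, ite_mul, zero_mul, ite_and]
    rw [Finset.sum_comm]
    conv_rhs => rw [Finset.sum_comm]
    simp only [← ite_sum_zero, Finset.sum_ite_eq, Finset.sum_ite_eq', Finset.mem_univ, if_true]
end
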